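/- Let d ≥ 1 and 0 ≤ r ≤ d. Every rank-r sequence M_1, …, M_m of matrices in M_d(ℚ) is the yield of some factorization tree of height at most d + 2. -/

import Mathlib

/-- A matrix `M` is *stable* if `rank M = rank M²`. -/
def MatStable {d : ℕ} (M : Matrix (Fin d) (Fin d) ℚ) : Prop :=
  M.rank = (M * M).rank

/-- `IsFactTree d h ys M` asserts that there is a factorization tree in `M_d(ℚ)` of
height at most `h`, with yield (left-to-right sequence of leaf labels) `ys` and root
label `M`: the label of every non-leaf node is the left-to-right product of the labels
of its children, and every node with three or more children has a stable label. -/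
inductive IsFactTree (d : ℕ) : ℕ → List (Matrix (Fin d) (Fin d) ℚ) → Matrix (Fin d) (Fin d) ℚ → Prop
  | leaf (h : ℕ) (M : Matrix (Fin d) (Fin d) ℚ) : IsFactTree d h [M] M
  | node (h : ℕ)
      (children : List ((List (Matrix (Fin d) (Fin d) ℚ)) × Matrix (Fin d) (Fin d) ℚ))
      (hne : children ≠ [])
      (hchildren : ∀ c ∈ children, IsFactTree d h c.1 c.2)
      (M : Matrix (Fin d) (Fin d) ℚ)
      (hprod : M = (children.map Prod.snd).prod)
      (hstable : 3 ≤ children.length → MatStable M) :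
      IsFactTree d (h + 1) (children.map Prod.fst).flatten M


namespace FactTreeAux


variable {d : ℕ}

abbrev Mat (d : ℕ) := Matrix (Fin d) (Fin d) ℚ

theorem tree_mono {h h' : ℕ} {ys : List (Mat d)} {M : Mat d}
    (ht : IsFactTree d h ys M) (hh : h ≤ h') : IsFactTree d h' ys M := by
  induction ht generalizing h' with
  | leaf h M => exact .leaf _ _
  | node h children hne hch M hprod hst ih =>
    obtain ⟨g, rfl⟩ : ∃ g, h' = g + 1 := ⟨h' - 1, by omega⟩
    exact .node g children hne (fun c hc => ih c hc (by omega)) M hprod hst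

theorem tree_pair {h : ℕ} {ys₁ ys₂ : List (Mat d)} {M₁ M₂ : Mat d}
    (t₁ : IsFactTree d h ys₁ M₁) (t₂ : IsFactTree d h ys₂ M₂) :
    IsFactTree d (h + 1) (ys₁ ++ ys₂) (M₁ * M₂) := by
  have := IsFactTree.node h [(ys₁, M₁), (ys₂, M₂)] (by simp)
    (by rintro c hc; simp at hc; rcases hc with rfl | rfl <;> assumption)
    (M₁ * M₂) (by simp) (by simp)
  simpa using this

theorem flatten_singletons (cs : List (Mat d)) : (cs.map fun M => [M]).flatten = cs := by
  induction cs with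
  | nil => rfl
  | cons a l ihl => simp [ihl]

theorem tree_wide {h : ℕ} (cs : List (Mat d)) (hne : cs ≠ [])
    (hst : 3 ≤ cs.length → MatStable cs.prod) :
    IsFactTree d (h + 1) cs cs.prod := by
  have := IsFactTree.node h (cs.map fun M => ([M], M)) (by simpa using hne)
    (by rintro c hc; simp at hc; obtain ⟨M, hM, rfl⟩ := hc; exact .leaf _ _)
    cs.prod (by rw [List.map_map]; congr 1; exact (List.map_id cs).symm ▸ rfl) (by simpa using hst)
  have hy : ((cs.map fun M => ([M], M)).map Prod.fst).flatten = cs := by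
    rw [List.map_map]; exact flatten_singletons cs
  rwa [hy] at this

theorem tree_balanced (t : ℕ) (L : List (List (Mat d) × Mat d)) (hne : L ≠ [])
    (hlen : L.length ≤ 2 ^ t) {h : ℕ} (hL : ∀ p ∈ L, IsFactTree d h p.1 p.2) :
    IsFactTree d (h + t) ((L.map Prod.fst).flatten) ((L.map Prod.snd).prod) := by
  induction t generalizing L with
  | zero =>
    simp only [pow_zero] at hlen
    obtain ⟨p, rfl⟩ : ∃ p, L = [p] := by
      match L, hne, hlen with
      | [p], _, _ => exact ⟨p, rfl⟩
    simpa using hL p (by simp)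
  | succ t ih =>
    by_cases hsmall : L.length ≤ 2 ^ t
    · exact tree_mono (ih L hne hsmall hL) (by omega)
    · push_neg at hsmall
      set L₁ := L.take (2 ^ t) with hL₁
      set L₂ := L.drop (2 ^ t) with hL₂
      have hpow : (0:ℕ) < 2 ^ t := Nat.pow_pos (by norm_num)
      have hlen1 : L₁.length = 2 ^ t := by rw [hL₁, List.length_take]; omega
      have hlen2 : L₂.length = L.length - 2 ^ t := by rw [hL₂, List.length_drop]
      have h1 : L₁ ≠ [] := List.ne_nil_of_length_pos (by omega)
      have h2 : L₂ ≠ [] := List.ne_nil_of_length_pos (by omega)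
      have hl1 : L₁.length ≤ 2 ^ t := by omega
      have hl2 : L₂.length ≤ 2 ^ t := by
        rw [hlen2]
        have : L.length ≤ 2 ^ (t+1) := hlen
        have : 2 ^ (t+1) = 2 ^ t + 2 ^ t := by ring
        omega
      have t₁ := ih L₁ h1 hl1 (fun p hp => hL p (List.mem_of_mem_take hp))
      have t₂ := ih L₂ h2 hl2 (fun p hp => hL p (List.mem_of_mem_drop hp))
      have := tree_pair t₁ t₂
      rw [← List.flatten_append, ← List.map_append, ← List.prod_append, ← List.map_append,
        List.take_append_drop] at this
      exact this



open Module

variable {d r : ℕ}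

-- finrank of image of a submodule plus finrank of kernel-intersection
theorem finrank_map_add
    {m n : ℕ} (f : (Fin m → ℚ) →ₗ[ℚ] (Fin n → ℚ)) (p : Submodule ℚ (Fin m → ℚ)) :
    finrank ℚ (p.map f) + finrank ℚ ↥(p ⊓ LinearMap.ker f) = finrank ℚ p := by
  have h := LinearMap.finrank_range_add_finrank_ker (f.comp p.subtype)
  have hr : LinearMap.range (f.comp p.subtype) = p.map f := by
    rw [LinearMap.range_comp, Submodule.range_subtype]
  have hk : LinearMap.ker (f.comp p.subtype) = (p ⊓ LinearMap.ker f).comap p.subtype := by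
    ext x; simp [LinearMap.mem_ker]
  have he : finrank ℚ ↥((p ⊓ LinearMap.ker f).comap p.subtype) =
      finrank ℚ ↥(p ⊓ LinearMap.ker f) := by
    apply LinearEquiv.finrank_eq
    exact Submodule.comapSubtypeEquivOfLe inf_le_left
  rw [hr, hk, he] at h
  exact h

-- key rank transfer: rank (A*B) = rank B → rank (A*B*C) = rank (B*C)
theorem rank_transfer {A B C : Matrix (Fin d) (Fin d) ℚ}
    (h : (A * B).rank = B.rank) : (A * B * C).rank = (B * C).rank := by
  classical
  set f := A.mulVecLin
  set g := B.mulVecLin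
  have hAB : (A * B).mulVecLin = f.comp g := Matrix.mulVecLin_mul A B
  have hrank : finrank ℚ ((LinearMap.range g).map f) = finrank ℚ (LinearMap.range g) := by
    rw [Matrix.rank, hAB, LinearMap.range_comp, Matrix.rank] at h
    exact h
  have hbot : LinearMap.range g ⊓ LinearMap.ker f = ⊥ := by
    have h2 := finrank_map_add f (LinearMap.range g)
    have : finrank ℚ ↥(LinearMap.range g ⊓ LinearMap.ker f) = 0 := by omega
    exact Submodule.finrank_eq_zero.mp this
  have hbot2 : LinearMap.range (B * C).mulVecLin ⊓ LinearMap.ker f = ⊥ := by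
    rw [eq_bot_iff, ← hbot]
    apply inf_le_inf_right
    rw [Matrix.mulVecLin_mul]
    exact LinearMap.range_comp_le_range _ _
  have h3 := finrank_map_add f (LinearMap.range (B * C).mulVecLin)
  rw [hbot2] at h3
  rw [finrank_bot, add_zero] at h3
  calc (A * B * C).rank = finrank ℚ (LinearMap.range ((A * B * C).mulVecLin)) := rfl
    _ = finrank ℚ ((LinearMap.range (B * C).mulVecLin).map f) := by
        rw [mul_assoc, Matrix.mulVecLin_mul, LinearMap.range_comp]
    _ = (B * C).rank := h3

-- a d×r matrix of full column rank gives injective mulVecLin; cancel on the left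
theorem rank_mul_eq_of_inj {m k : ℕ} (E : Matrix (Fin m) (Fin r) ℚ) (hE : E.rank = r)
    (W : Matrix (Fin r) (Fin k) ℚ) : (E * W).rank = W.rank := by
  have hker : LinearMap.ker E.mulVecLin = ⊥ := by
    have h := LinearMap.finrank_range_add_finrank_ker E.mulVecLin
    rw [show finrank ℚ (LinearMap.range E.mulVecLin) = E.rank from rfl, hE] at h
    simp only [finrank_fintype_fun_eq_card, Fintype.card_fin] at h
    exact Submodule.finrank_eq_zero.mp (by omega)
  have hinj : Function.Injective E.mulVecLin := LinearMap.ker_eq_bot.mp hker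
  have : LinearMap.range ((E * W).mulVecLin) =
      (LinearMap.range W.mulVecLin).map E.mulVecLin := by
    rw [Matrix.mulVecLin_mul, LinearMap.range_comp]
  rw [Matrix.rank, this, Matrix.rank]
  exact (LinearEquiv.finrank_eq (Submodule.equivMapOfInjective _ hinj _)).symm

-- an r×d matrix of full row rank gives surjective mulVecLin; cancel on the right
theorem rank_mul_eq_of_surj {m : ℕ} (F : Matrix (Fin r) (Fin d) ℚ) (hF : F.rank = r)
    (X : Matrix (Fin m) (Fin r) ℚ) : (X * F).rank = X.rank := by
  have htop : LinearMap.range F.mulVecLin = ⊤ := by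
    apply Submodule.eq_top_of_finrank_eq
    rw [show finrank ℚ (LinearMap.range F.mulVecLin) = F.rank from rfl, hF]
    simp
  rw [Matrix.rank, Matrix.mulVecLin_mul, LinearMap.range_comp, htop, Submodule.map_top,
    Matrix.rank]

-- determinant and rank for square matrices
theorem det_ne_zero_iff_rank {Z : Matrix (Fin r) (Fin r) ℚ} : Z.det ≠ 0 ↔ Z.rank = r := by
  constructor
  · intro h
    have : IsUnit Z := (Matrix.isUnit_iff_isUnit_det Z).mpr (IsUnit.mk0 _ h)
    rw [Matrix.rank_of_isUnit Z this, Fintype.card_fin]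
  · intro h hdet
    obtain ⟨v, hv, hmv⟩ := (Matrix.exists_mulVec_eq_zero_iff).mpr hdet
    have hker : v ∈ LinearMap.ker Z.mulVecLin := by
      simpa [Matrix.mulVecLin] using hmv
    have hkerne : LinearMap.ker Z.mulVecLin ≠ ⊥ := by
      intro hb; rw [hb] at hker; simp at hker; exact hv hker
    have h2 := LinearMap.finrank_range_add_finrank_ker Z.mulVecLin
    rw [show finrank ℚ (LinearMap.range Z.mulVecLin) = Z.rank from rfl, h] at h2
    simp only [finrank_fintype_fun_eq_card, Fintype.card_fin] at h2
    have : finrank ℚ (LinearMap.ker Z.mulVecLin) = 0 := by omega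
    exact hkerne (Submodule.finrank_eq_zero.mp this)

-- rank factorization
theorem exists_rank_factorization (X : Matrix (Fin d) (Fin d) ℚ) (hX : X.rank = r) :
    ∃ (E : Matrix (Fin d) (Fin r) ℚ) (F : Matrix (Fin r) (Fin d) ℚ), X = E * F := by
  classical
  have : FiniteDimensional ℚ (LinearMap.range X.mulVecLin) := by infer_instance
  have hfr : finrank ℚ (LinearMap.range X.mulVecLin) = r := hX
  let b : Basis (Fin r) ℚ (LinearMap.range X.mulVecLin) :=
    (Module.finBasis ℚ (LinearMap.range X.mulVecLin)).reindex (finCongr hfr)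
  refine ⟨Matrix.of (fun i j => (b j : Fin d → ℚ) i),
    Matrix.of (fun j i => b.repr ⟨X.mulVec (Pi.single i 1),
      ⟨Pi.single i 1, rfl⟩⟩ j), ?_⟩
  ext i k
  rw [Matrix.mul_apply]
  have hcol : X i k = (X.mulVec (Pi.single k 1)) i := by
    simp [Matrix.mulVec_single]
  rw [hcol]
  set y : LinearMap.range X.mulVecLin := ⟨X.mulVec (Pi.single k 1), ⟨Pi.single k 1, rfl⟩⟩
  have : X.mulVec (Pi.single k 1) = (y : Fin d → ℚ) := rfl
  rw [this]
  conv_lhs => rw [← b.sum_repr y]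
  simp only [Finset.sum_apply, SetLike.coe_sort_coe, Submodule.coe_sum, Submodule.coe_smul,
    Pi.smul_apply, smul_eq_mul, Matrix.of_apply]
  apply Finset.sum_congr rfl
  intro j _
  ring



open Module

variable {d r : ℕ}

/-- the vector of `r×r` row-minors of a `d×r` matrix, indexed by all row-selections -/
noncomputable def uvec (E : Matrix (Fin d) (Fin r) ℚ) : (Fin r → Fin d) → ℚ :=
  fun φ => (E.submatrix φ id).det

/-- the coordinate-products of an `r×d` matrix -/
noncomputable def wvec (F : Matrix (Fin r) (Fin d) ℚ) : (Fin r → Fin d) → ℚ :=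
  fun φ => ∏ j, F j (φ j)

/-- submodule of alternating vectors -/
def AltSub (d r : ℕ) : Submodule ℚ ((Fin r → Fin d) → ℚ) where
  carrier := {u | (∀ φ : Fin r → Fin d, ¬Function.Injective φ → u φ = 0) ∧
    ∀ (σ : Equiv.Perm (Fin r)) (φ : Fin r → Fin d),
      u (φ ∘ σ) = ((Equiv.Perm.sign σ : ℤ) : ℚ) * u φ}
  add_mem' := by
    rintro u v ⟨hu1, hu2⟩ ⟨hv1, hv2⟩
    constructor
    · intro φ hφ; simp [hu1 φ hφ, hv1 φ hφ]
    · intro σ φ; simp only [Pi.add_apply, hu2 σ φ, hv2 σ φ]; ring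
  zero_mem' := by constructor <;> simp
  smul_mem' := by
    rintro c u ⟨hu1, hu2⟩
    constructor
    · intro φ hφ; simp [hu1 φ hφ]
    · intro σ φ; simp only [Pi.smul_apply, hu2 σ φ, smul_eq_mul]; ring

theorem uvec_mem (E : Matrix (Fin d) (Fin r) ℚ) : uvec E ∈ AltSub d r := by
  constructor
  · intro φ hφ
    rw [Function.not_injective_iff] at hφ
    obtain ⟨i, j, hij, hne⟩ := hφ
    exact Matrix.det_zero_of_row_eq hne (by funext k; simp [Matrix.submatrix, hij])
  · intro σ φ
    have : (E.submatrix (φ ∘ σ) id) = (E.submatrix φ id).submatrix σ id := rfl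
    rw [uvec, this, Matrix.det_permute]
    rfl

/-- multilinear expansion of the determinant of a product (baby Cauchy–Binet) -/
theorem det_mul_expand (F : Matrix (Fin r) (Fin d) ℚ) (E : Matrix (Fin d) (Fin r) ℚ) :
    (F * E).det = ∑ φ : Fin r → Fin d, wvec F φ * uvec E φ := by
  classical
  have hrow : (fun j => (F * E) j) = fun j => ∑ k : Fin d, F j k • E k := by
    funext j i
    simp [Matrix.mul_apply, Finset.sum_apply]
  calc (F * E).det = Matrix.detRowAlternating (F * E) := rfl
    _ = Matrix.detRowAlternating.toMultilinearMap (fun j => ∑ k : Fin d, F j k • E k) := by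
        rw [show ((F * E) : Matrix (Fin r) (Fin r) ℚ) = fun j => ∑ k : Fin d, F j k • E k
          from hrow]
        rfl
    _ = ∑ φ : Fin r → Fin d,
          Matrix.detRowAlternating.toMultilinearMap (fun j => F j (φ j) • E (φ j)) := by
        rw [MultilinearMap.map_sum]
    _ = ∑ φ : Fin r → Fin d, wvec F φ * uvec E φ := by
        apply Finset.sum_congr rfl
        intro φ _
        rw [MultilinearMap.map_smul_univ]
        rfl

/-- the restriction of an alternating vector to sorted selections, injective -/
theorem altsub_eq_zero (u : (Fin r → Fin d) → ℚ) (hu : u ∈ AltSub d r)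
    (h : ∀ S : Finset (Fin d), (hS : S.card = r) →
      u (fun i => ((S.orderIsoOfFin hS i : Fin d))) = 0) : u = 0 := by
  classical
  funext φ
  by_cases hinj : Function.Injective φ
  · set S : Finset (Fin d) := Finset.univ.image φ with hS
    have hcard : S.card = r := by
      rw [hS, Finset.card_image_of_injective _ hinj, Finset.card_univ, Fintype.card_fin]
    set eS := S.orderIsoOfFin hcard
    have hmem : ∀ i, φ i ∈ S := by intro i; simp [hS]
    let ψ : Fin r → S := fun i => ⟨φ i, hmem i⟩
    have hψinj : Function.Injective ψ := by
      intro a b hab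
      exact hinj (congrArg Subtype.val hab)
    have hψbij : Function.Bijective ψ := by
      rw [Fintype.bijective_iff_injective_and_card]
      refine ⟨hψinj, ?_⟩
      simp [Fintype.card_coe, hcard]
    let σ : Equiv.Perm (Fin r) := (Equiv.ofBijective ψ hψbij).trans eS.symm.toEquiv
    have hfac : φ = (fun i => ((eS i : Fin d))) ∘ σ := by
      funext i
      show φ i = ((eS (eS.symm (ψ i)) : Fin d))
      rw [OrderIso.apply_symm_apply]
    have h0 : u (fun i => ((eS i : Fin d))) = 0 := h S hcard
    calc u φ = u ((fun i => ((eS i : Fin d))) ∘ σ) := by rw [← hfac]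
      _ = ((Equiv.Perm.sign σ : ℤ) : ℚ) * u (fun i => ((eS i : Fin d))) := hu.2 σ _
      _ = 0 := by rw [h0, mul_zero]
  · exact hu.1 φ hinj

theorem finrank_altsub_le : finrank ℚ (AltSub d r) ≤ d.choose r := by
  classical
  let ρ : (AltSub d r) →ₗ[ℚ] ({S : Finset (Fin d) // S.card = r} → ℚ) :=
    { toFun := fun u => fun S => (u : (Fin r → Fin d) → ℚ) (fun i => ((S.1.orderIsoOfFin S.2 i : Fin d)))
      map_add' := by intros; rfl
      map_smul' := by intros; rfl }
  have hinj : Function.Injective ρ := by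
    rw [← LinearMap.ker_eq_bot, eq_bot_iff]
    rintro ⟨u, hu⟩ hker
    have hker' : ρ ⟨u, hu⟩ = 0 := hker
    have hvan : ∀ S : Finset (Fin d), (hS : S.card = r) →
        u (fun i => ((S.orderIsoOfFin hS i : Fin d))) = 0 :=
      fun S hSc => congrFun hker' ⟨S, hSc⟩
    have hu0 := altsub_eq_zero u hu hvan
    exact (Submodule.mem_bot ℚ).mpr (Subtype.ext hu0)
  calc finrank ℚ (AltSub d r) ≤ finrank ℚ ({S : Finset (Fin d) // S.card = r} → ℚ) :=
        LinearMap.finrank_le_finrank_of_injective hinj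
    _ = Fintype.card {S : Finset (Fin d) // S.card = r} := finrank_fintype_fun_eq_card ℚ
    _ = (Fintype.card (Fin d)).choose r := Fintype.card_finset_len r
    _ = d.choose r := by rw [Fintype.card_fin]

/-- triangular pairing gives a cardinality bound -/
theorem card_le_of_pairing {q : ℕ} {W : Type*} [AddCommGroup W] [Module ℚ W]
    [FiniteDimensional ℚ W] (v : Fin q → W) (f : Fin q → (W →ₗ[ℚ] ℚ))
    (hzero : ∀ s t : Fin q, s < t → f t (v s) = 0) (hdiag : ∀ s, f s (v s) ≠ 0) :
    q ≤ finrank ℚ W := by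
  classical
  have hli : LinearIndependent ℚ v := by
    rw [Fintype.linearIndependent_iff]
    intro g hg
    by_contra hne
    push_neg at hne
    obtain ⟨s0, hs0⟩ := hne
    set T : Finset (Fin q) := Finset.univ.filter (fun s => g s ≠ 0) with hT
    have hTne : T.Nonempty := ⟨s0, by simp [hT, hs0]⟩
    set t0 := T.max' hTne with ht0
    have ht0T : t0 ∈ T := T.max'_mem hTne
    have hgt0 : g t0 ≠ 0 := by simpa [hT] using ht0T
    have happ := congrArg (f t0) hg
    rw [map_sum, map_zero] at happ
    simp only [map_smul, smul_eq_mul] at happ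
    have hsum : ∑ s : Fin q, g s * (f t0) (v s) = g t0 * (f t0) (v t0) := by
      apply Finset.sum_eq_single
      · intro b _ hb
        by_cases hgb : g b = 0
        · simp [hgb]
        · have hbT : b ∈ T := by simp [hT, hgb]
          have : b < t0 := lt_of_le_of_ne (T.le_max' b hbT) hb
          rw [hzero b t0 this, mul_zero]
      · intro h; exact absurd (Finset.mem_univ t0) h
    rw [hsum] at happ
    rcases mul_eq_zero.mp happ with h | h
    · exact hgt0 h
    · exact hdiag t0 h
  simpa using hli.fintype_card_le_finrank


theorem rank_factor_left {X : Matrix (Fin d) (Fin d) ℚ} {E : Matrix (Fin d) (Fin r) ℚ}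
    {F : Matrix (Fin r) (Fin d) ℚ} (hX : X = E * F) (hXr : X.rank = r) : E.rank = r := by
  apply le_antisymm
  · exact (Matrix.rank_le_card_width E).trans (by simp)
  · calc r = X.rank := hXr.symm
      _ ≤ E.rank := by rw [hX]; exact Matrix.rank_mul_le_left E F

theorem rank_factor_right {X : Matrix (Fin d) (Fin d) ℚ} {E : Matrix (Fin d) (Fin r) ℚ}
    {F : Matrix (Fin r) (Fin d) ℚ} (hX : X = E * F) (hXr : X.rank = r) : F.rank = r := by
  apply le_antisymm
  · exact (Matrix.rank_le_card_height F).trans (by simp)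
  · calc r = X.rank := hXr.symm
      _ ≤ F.rank := by rw [hX]; exact Matrix.rank_mul_le_right E F

/-- the key bridge: the rank of `Y * X` is detected by a determinant pairing of
factorizations of `X` and `Y`. -/
theorem pairing_rank {X Y : Matrix (Fin d) (Fin d) ℚ}
    {EX : Matrix (Fin d) (Fin r) ℚ} {FX : Matrix (Fin r) (Fin d) ℚ}
    {EY : Matrix (Fin d) (Fin r) ℚ} {FY : Matrix (Fin r) (Fin d) ℚ}
    (hX : X = EX * FX) (hXr : X.rank = r) (hY : Y = EY * FY) (hYr : Y.rank = r) :
    (Y * X).rank = r ↔ (FY * EX).det ≠ 0 := by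
  have hassoc : Y * X = EY * ((FY * EX) * FX) := by
    rw [hX, hY, Matrix.mul_assoc EY FY (EX * FX), ← Matrix.mul_assoc FY EX FX]
  constructor
  · intro h
    rw [det_ne_zero_iff_rank]
    apply le_antisymm
    · exact (Matrix.rank_le_card_width _).trans (by simp)
    · calc r = (Y * X).rank := h.symm
        _ ≤ ((FY * EX) * FX).rank := by rw [hassoc]; exact Matrix.rank_mul_le_right _ _
        _ ≤ (FY * EX).rank := Matrix.rank_mul_le_left _ _
  · intro h
    rw [det_ne_zero_iff_rank] at h
    rw [hassoc, rank_mul_eq_of_inj EY (rank_factor_left hY hYr) _,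
      rank_mul_eq_of_inj (FY * EX) h FX]
    exact rank_factor_right hX hXr

section Comb

attribute [local instance] Classical.propDecidable

variable {d r : ℕ} (Mf : ℕ → Matrix (Fin d) (Fin d) ℚ) (n : ℕ)

/-- product of the run of length `l` starting at `a` -/
noncomputable def runProd (a l : ℕ) : Matrix (Fin d) (Fin d) ℚ :=
  ((List.range' a l).map Mf).prod

theorem runProd_cons {a l : ℕ} : runProd Mf a (l + 1) = Mf a * runProd Mf (a + 1) l := by
  unfold runProd
  rw [List.range'_succ]
  simp

theorem runProd_one {a : ℕ} : runProd Mf a 1 = Mf a := by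
  unfold runProd
  simp [List.range'_succ]

theorem runProd_two {a : ℕ} : runProd Mf a 2 = Mf a * Mf (a + 1) := by
  rw [show (2:ℕ) = 1 + 1 from rfl, runProd_cons, runProd_one]

variable {n} (hp : (runProd Mf 0 n).rank = r) (hrk : ∀ i < n, (Mf i).rank = r)
include hp hrk

theorem runProd_rank {a l : ℕ} (hl : 1 ≤ l) (hln : a + l ≤ n) :
    (runProd Mf a l).rank = r := by
  have hsplit : runProd Mf 0 n
      = runProd Mf 0 a * runProd Mf a l * runProd Mf (a + l) (n - (a + l)) := by
    unfold runProd
    rw [← List.prod_append, ← List.prod_append, ← List.map_append, ← List.map_append]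
    congr 2
    have h1 : List.range' 0 a ++ List.range' (0 + a) l = List.range' 0 (l + a) :=
      by rw [List.range'_append_1, Nat.add_comm a l]
    rw [show (0:ℕ) + a = a from by omega, show l + a = a + l from by omega] at h1
    have h2 : List.range' 0 (a + l) ++ List.range' (0 + (a + l)) (n - (a + l))
        = List.range' 0 (n - (a + l) + (a + l)) := by rw [List.range'_append_1, Nat.add_comm (a + l)]
    rw [show (0:ℕ) + (a + l) = a + l from by omega, show n - (a + l) + (a + l) = n from by omega] at h2
    rw [h1, h2]
  apply le_antisymm
  · obtain ⟨l', rfl⟩ : ∃ l', l = l' + 1 := ⟨l - 1, by omega⟩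
    calc (runProd Mf a (l' + 1)).rank ≤ (Mf a).rank := by
          rw [runProd_cons]; exact Matrix.rank_mul_le_left _ _
      _ = r := hrk a (by omega)
  · calc r = (runProd Mf 0 n).rank := hp.symm
      _ ≤ (runProd Mf 0 a * runProd Mf a l).rank := by
          rw [hsplit]; exact Matrix.rank_mul_le_left _ _
      _ ≤ (runProd Mf a l).rank := Matrix.rank_mul_le_right _ _

theorem runProd_peel :
    ∀ l, 1 ≤ l → ∀ a, a + l ≤ n → ∀ C : Matrix (Fin d) (Fin d) ℚ,
    (runProd Mf a l * C).rank = (Mf (a + l - 1) * C).rank := by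
  intro l
  induction l with
  | zero => omega
  | succ l ih =>
    intro _ a hln C
    rcases Nat.eq_zero_or_pos l with rfl | hl
    · rw [runProd_one, show a + (0 + 1) - 1 = a from by omega]
    · have hAB : (Mf a * runProd Mf (a + 1) l).rank = (runProd Mf (a + 1) l).rank := by
        rw [← runProd_cons]
        rw [runProd_rank Mf hp hrk (by omega) hln,
          runProd_rank Mf hp hrk (by omega) (by omega)]
      calc (runProd Mf a (l + 1) * C).rank
          = (Mf a * runProd Mf (a + 1) l * C).rank := by rw [runProd_cons]
        _ = (runProd Mf (a + 1) l * C).rank := rank_transfer hAB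
        _ = (Mf (a + 1 + l - 1) * C).rank := ih hl (a + 1) (by omega) C
        _ = (Mf (a + (l + 1) - 1) * C).rank := by rw [show a + 1 + l - 1 = a + (l + 1) - 1 from by omega]

theorem runProd_stable {a l : ℕ} (h1 : 1 ≤ l) (hln : a + l ≤ n)
    (hend : (Mf (a + l - 1) * Mf a).rank = r) : MatStable (runProd Mf a l) := by
  obtain ⟨l', rfl⟩ : ∃ l', l = l' + 1 := ⟨l - 1, by omega⟩
  have hPr : (runProd Mf a (l' + 1)).rank = r := runProd_rank Mf hp hrk h1 hln
  have step1 : (runProd Mf a (l' + 1) * runProd Mf a (l' + 1)).rank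
      = (Mf (a + (l' + 1) - 1) * runProd Mf a (l' + 1)).rank :=
    runProd_peel Mf hp hrk (l' + 1) h1 a hln _
  have hAB : (Mf (a + (l' + 1) - 1) * Mf a).rank = (Mf a).rank := by
    rw [hend, hrk a (by omega)]
  have step2 : (Mf (a + (l' + 1) - 1) * runProd Mf a (l' + 1)).rank
      = (runProd Mf a (l' + 1)).rank := by
    rw [runProd_cons, ← Matrix.mul_assoc, rank_transfer hAB, ← runProd_cons]
  show (runProd Mf a (l' + 1)).rank = (runProd Mf a (l' + 1) * runProd Mf a (l' + 1)).rank
  rw [step1, step2]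

end Comb

section Greedy

attribute [local instance] Classical.propDecidable

variable {d : ℕ} (Mf : ℕ → Matrix (Fin d) (Fin d) ℚ) (n r : ℕ)

/-- the candidate right endpoints for the greedy chunk starting at `a` -/
noncomputable def FS (a : ℕ) : Finset ℕ :=
  (Finset.range n).filter fun j => a ≤ j ∧ (j ≤ a + 1 ∨ (Mf j * Mf a).rank = r)

theorem FS_self_mem {a : ℕ} (h : a < n) : a ∈ FS Mf n r a := by
  simp [FS, Finset.mem_filter, Finset.mem_range, h]

/-- the greedy right endpoint of the chunk starting at `a` -/
noncomputable def nxt (a : ℕ) : ℕ :=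
  if h : a < n then (FS Mf n r a).max' ⟨a, FS_self_mem Mf n r h⟩ else a

theorem nxt_ge (a : ℕ) : a ≤ nxt Mf n r a := by
  unfold nxt
  split
  · exact Finset.le_max' _ a (FS_self_mem Mf n r (by assumption))
  · exact le_rfl

theorem nxt_lt {a : ℕ} (h : a < n) : nxt Mf n r a < n := by
  unfold nxt
  rw [dif_pos h]
  have := Finset.max'_mem (FS Mf n r a) ⟨a, FS_self_mem Mf n r h⟩
  simp only [FS, Finset.mem_filter, Finset.mem_range] at this
  exact this.1

theorem nxt_max {a j : ℕ} (h : a < n) (hj : nxt Mf n r a < j) (hjn : j < n) :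
    (Mf j * Mf a).rank ≠ r := by
  intro hrank
  have hmem : j ∈ FS Mf n r a := by
    simp only [FS, Finset.mem_filter, Finset.mem_range]
    refine ⟨hjn, ?_, Or.inr hrank⟩
    have := nxt_ge Mf n r a
    omega
  have := Finset.le_max' (FS Mf n r a) j hmem
  unfold nxt at hj
  rw [dif_pos h] at hj
  omega

theorem nxt_rank {a : ℕ} (h : a < n) (h2 : a + 2 ≤ nxt Mf n r a) :
    (Mf (nxt Mf n r a) * Mf a).rank = r := by
  have heq : nxt Mf n r a = (FS Mf n r a).max' ⟨a, FS_self_mem Mf n r h⟩ := by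
    unfold nxt; rw [dif_pos h]
  have hmem : nxt Mf n r a ∈ FS Mf n r a := by
    rw [heq]; exact Finset.max'_mem _ _
  simp only [FS, Finset.mem_filter, Finset.mem_range] at hmem
  rcases hmem.2.2 with h' | h'
  · omega
  · exact h'

/-- the greedy chunk starting points -/
noncomputable def sts : ℕ → ℕ
  | 0 => 0
  | t + 1 => nxt Mf n r (sts t) + 1

theorem sts_lt_succ (t : ℕ) : sts Mf n r t < sts Mf n r (t + 1) := by
  show sts Mf n r t < nxt Mf n r (sts Mf n r t) + 1
  have := nxt_ge Mf n r (sts Mf n r t)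
  omega

theorem sts_strict_mono : StrictMono (sts Mf n r) :=
  strictMono_nat_of_lt_succ (sts_lt_succ Mf n r)

theorem sts_ge (t : ℕ) : t ≤ sts Mf n r t := by
  induction t with
  | zero => exact le_rfl
  | succ t ih => have := sts_lt_succ Mf n r t; omega

theorem flatten_parts_aux :
    ∀ m j, sts Mf n r (j + m) = n →
    ((List.range' j m).map fun t =>
        (List.range' (sts Mf n r t) (sts Mf n r (t + 1) - sts Mf n r t)).map Mf).flatten
      = (List.range' (sts Mf n r j) (n - sts Mf n r j)).map Mf := by
  intro m
  induction m with
  | zero =>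
    intro j hj
    simp only [Nat.add_zero] at hj
    rw [hj]
    simp
  | succ m ih =>
    intro j hj
    have hmono : sts Mf n r j < sts Mf n r (j + 1) := sts_lt_succ Mf n r j
    have hle : sts Mf n r (j + 1) ≤ n := by
      have h1 : sts Mf n r (j + 1) ≤ sts Mf n r (j + (m + 1)) :=
        (sts_strict_mono Mf n r).monotone (by omega)
      omega
    rw [List.range'_succ, List.map_cons, List.flatten_cons,
      ih (j + 1) (by rw [show j + 1 + m = j + (m + 1) from by omega]; exact hj),
      ← List.map_append]
    congr 1
    have happ := List.range'_append_1 (s := sts Mf n r j) (m := sts Mf n r (j + 1) - sts Mf n r j)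
      (n := n - sts Mf n r (j + 1))
    rw [show sts Mf n r j + (sts Mf n r (j + 1) - sts Mf n r j) = sts Mf n r (j + 1) from by omega,
      show (sts Mf n r (j + 1) - sts Mf n r j) + (n - sts Mf n r (j + 1)) = n - sts Mf n r j from by
        omega] at happ
    exact happ

end Greedy

theorem choose_add_one_le {d r : ℕ} (hd : 1 ≤ d) (hr : r ≤ d) :
    d.choose r + 1 ≤ 2 ^ d := by
  have hsum := Nat.sum_range_choose d
  rcases Nat.eq_zero_or_pos r with rfl | hrpos
  · have h2 : 2 ≤ 2 ^ d := by
      calc 2 = 2 ^ 1 := rfl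
        _ ≤ 2 ^ d := Nat.pow_le_pow_right (by omega) hd
    simp only [Nat.choose_zero_right]
    omega
  · have hsub : ({r, 0} : Finset ℕ) ⊆ Finset.range (d + 1) := by
      intro x hx
      simp only [Finset.mem_insert, Finset.mem_singleton] at hx
      rcases hx with rfl | rfl <;> simp only [Finset.mem_range] <;> omega
    have hpair : d.choose r + d.choose 0 ≤ ∑ i ∈ Finset.range (d + 1), d.choose i := by
      calc d.choose r + d.choose 0 = ∑ i ∈ ({r, 0} : Finset ℕ), d.choose i :=
            (Finset.sum_pair (by omega)).symm
        _ ≤ _ := Finset.sum_le_sum_of_subset hsub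
    simp only [Nat.choose_zero_right] at hpair
    omega

end FactTreeAux

open FactTreeAux in
/-- Every rank-`r` sequence of matrices in `M_d(ℚ)` (each matrix has rank `r` and the
product of the sequence has rank `r`), with `d ≥ 1` and `r ≤ d`, is the yield of some
factorization tree of height at most `d + 2`. -/
theorem rank_r_sequence_factorization_tree (d r : ℕ) (hd : 1 ≤ d) (hr : r ≤ d)
    (Ms : List (Matrix (Fin d) (Fin d) ℚ)) (hne : Ms ≠ [])
    (hrank : ∀ M ∈ Ms, M.rank = r) (hprod : Ms.prod.rank = r) :
    ∃ M, IsFactTree d (d + 2) Ms M := by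
  classical
  set n := Ms.length with hndef
  set Mf : ℕ → Matrix (Fin d) (Fin d) ℚ := fun i => Ms.getD i 1 with hMf
  have hn : 0 < n := List.length_pos_iff.mpr hne
  have hMs : Ms = (List.range' 0 n).map Mf := by
    apply List.ext_getElem
    · simp [hndef]
    · intro i h1 h2
      simp only [List.getElem_map, List.getElem_range'_1, Nat.zero_add, hMf]
      exact (List.getD_eq_getElem Ms 1 h1).symm
  have hrk : ∀ i < n, (Mf i).rank = r := by
    intro i hi
    apply hrank
    rw [hMf]
    simp only []
    rw [List.getD_eq_getElem Ms 1 hi]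
    exact List.getElem_mem _
  have hp' : (runProd Mf 0 n).rank = r := by
    rw [runProd, ← hMs]; exact hprod
  -- greedy chunking
  have hex : ∃ t, n ≤ sts Mf n r t := ⟨n, sts_ge Mf n r n⟩
  set k := Nat.find hex with hkdef
  have hkspec : n ≤ sts Mf n r k := Nat.find_spec hex
  have hklt : ∀ t < k, sts Mf n r t < n := by
    intro t ht
    have := Nat.find_min hex ht
    omega
  have hk1 : 1 ≤ k := by
    rcases Nat.eq_zero_or_pos k with h0 | h
    · rw [h0] at hkspec
      have : sts Mf n r 0 = 0 := rfl
      omega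
    · exact h
  have hkn : sts Mf n r k = n := by
    obtain ⟨k', hk'⟩ : ∃ k', k = k' + 1 := ⟨k - 1, by omega⟩
    have h1 : sts Mf n r k' < n := hklt k' (by omega)
    have h2 : sts Mf n r (k' + 1) = nxt Mf n r (sts Mf n r k') + 1 := rfl
    have h3 := nxt_lt Mf n r h1
    have h4 : n ≤ sts Mf n r (k' + 1) := hk' ▸ hkspec
    rw [hk']
    omega
  -- the chunk bound
  have hk2D : k ≤ 2 * d.choose r + 2 := by
    by_contra hbig
    push_neg at hbig
    have hfac : ∀ i, ∃ (E : Matrix (Fin d) (Fin r) ℚ) (F : Matrix (Fin r) (Fin d) ℚ),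
        i < n → Mf i = E * F := by
      intro i
      by_cases hi : i < n
      · obtain ⟨E, F, hEFi⟩ := exists_rank_factorization (Mf i) (hrk i hi)
        exact ⟨E, F, fun _ => hEFi⟩
      · exact ⟨0, 0, fun hcon => absurd hcon hi⟩
    choose Ef Ff hEF using hfac
    set D := d.choose r with hD
    set pos : Fin (D + 1) → ℕ := fun s => sts Mf n r (2 * (s : ℕ) + 1) with hpos
    set qpos : Fin (D + 1) → ℕ := fun s => sts Mf n r (2 * (s : ℕ) + 1) - 1 with hqpos
    have hposlt : ∀ s : Fin (D + 1), 2 * (s : ℕ) + 1 < k := by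
      intro s
      have := s.2
      omega
    have hposn : ∀ s, pos s < n := fun s => hklt _ (hposlt s)
    have hpos1 : ∀ s : Fin (D + 1), 1 ≤ pos s := by
      intro s
      have := sts_ge Mf n r (2 * (s : ℕ) + 1)
      simp only [hpos]
      omega
    have hqpos_lt : ∀ s, qpos s < n := by
      intro s
      have h1 := hposn s
      have h2 := hpos1 s
      simp only [hqpos, hpos] at *
      omega
    have hq1 : ∀ s, qpos s + 1 = pos s := by
      intro s
      have := hpos1 s
      simp only [hqpos, hpos] at *
      omega
    set pairf : ((Fin r → Fin d) → ℚ) → ((AltSub d r) →ₗ[ℚ] ℚ) := fun w =>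
      (∑ φ : Fin r → Fin d, w φ • LinearMap.proj φ).comp (AltSub d r).subtype with hpairf
    have pairf_apply : ∀ w u, pairf w u
        = ∑ φ : Fin r → Fin d, w φ * (u : (Fin r → Fin d) → ℚ) φ := by
      intro w u
      simp [hpairf, LinearMap.sum_apply, LinearMap.proj_apply, smul_eq_mul]
    set v : Fin (D + 1) → (AltSub d r) := fun s => ⟨uvec (Ef (pos s)), uvec_mem _⟩ with hv
    set f : Fin (D + 1) → ((AltSub d r) →ₗ[ℚ] ℚ) := fun t => pairf (wvec (Ff (qpos t))) with hf
    have hfval : ∀ t s, f t (v s) = (Ff (qpos t) * Ef (pos s)).det := by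
      intro t s
      rw [hf, hv]
      rw [pairf_apply, ← det_mul_expand]
    have hdiag : ∀ s, f s (v s) ≠ 0 := by
      intro s
      rw [hfval]
      rw [← pairing_rank (hEF (pos s) (hposn s)) (hrk _ (hposn s))
        (hEF (qpos s) (hqpos_lt s)) (hrk _ (hqpos_lt s))]
      have h2 : qpos s + 2 ≤ n := by
        have h3 := hposn s
        have h4 := hq1 s
        omega
      have hrun := runProd_rank Mf hp' hrk (a := qpos s) (l := 2) (by omega) (by omega)
      rw [runProd_two] at hrun
      rw [hq1 s] at hrun
      exact hrun
    have hzero : ∀ s t, s < t → f t (v s) = 0 := by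
      intro s t hst
      rw [hfval]
      by_contra hdet
      have hrankst := (pairing_rank (hEF (pos s) (hposn s)) (hrk _ (hposn s))
        (hEF (qpos t) (hqpos_lt t)) (hrk _ (hqpos_lt t))).mpr hdet
      have hj : nxt Mf n r (pos s) < qpos t := by
        have h1 : sts Mf n r (2 * (s : ℕ) + 1 + 1) = nxt Mf n r (sts Mf n r (2 * (s : ℕ) + 1)) + 1 := rfl
        have h2 : sts Mf n r (2 * (s : ℕ) + 1 + 1) < sts Mf n r (2 * (t : ℕ) + 1) := by
          apply sts_strict_mono
          have : (s : ℕ) < (t : ℕ) := hst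
          omega
        have h3 := sts_ge Mf n r (2 * (t : ℕ) + 1)
        simp only [hqpos, hpos] at *
        omega
      exact nxt_max Mf n r (hposn s) hj (hqpos_lt t) hrankst
    have hcard := card_le_of_pairing v f hzero hdiag
    have hfin := finrank_altsub_le (d := d) (r := r)
    omega
  -- numeric bound
  have hknum : k ≤ 2 ^ (d + 1) := by
    have h1 := choose_add_one_le hd hr
    have h2 : 2 ^ (d + 1) = 2 * 2 ^ d := by ring
    omega
  -- assemble the tree
  set parts : List (List (Matrix (Fin d) (Fin d) ℚ)) := (List.range k).map fun t =>
    (List.range' (sts Mf n r t) (sts Mf n r (t + 1) - sts Mf n r t)).map Mf with hparts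
  set L : List (List (Matrix (Fin d) (Fin d) ℚ) × Matrix (Fin d) (Fin d) ℚ) :=
    parts.map fun c => (c, c.prod) with hL
  have hLtrees : ∀ p ∈ L, IsFactTree d 1 p.1 p.2 := by
    intro p hp
    rw [hL] at hp
    simp only [List.mem_map] at hp
    obtain ⟨c, hc, rfl⟩ := hp
    rw [hparts] at hc
    simp only [List.mem_map, List.mem_range] at hc
    obtain ⟨t, ht, rfl⟩ := hc
    dsimp only
    have hmono := sts_lt_succ Mf n r t
    have hnxtlt := nxt_lt Mf n r (hklt t ht)
    have hsteq : sts Mf n r (t + 1) = nxt Mf n r (sts Mf n r t) + 1 := rfl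
    refine tree_wide (h := 0) _ ?_ ?_
    · apply List.ne_nil_of_length_pos
      simp only [List.length_map, List.length_range']
      omega
    · intro h3
      simp only [List.length_map, List.length_range'] at h3
      show MatStable (runProd Mf (sts Mf n r t) (sts Mf n r (t + 1) - sts Mf n r t))
      apply runProd_stable Mf hp' hrk (by omega) (by omega)
      rw [show sts Mf n r t + (sts Mf n r (t + 1) - sts Mf n r t) - 1
          = nxt Mf n r (sts Mf n r t) from by omega]
      exact nxt_rank Mf n r (hklt t ht) (by omega)
  have hLlen : L.length = k := by simp [hL, hparts]
  have hLne : L ≠ [] := by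
    apply List.ne_nil_of_length_pos
    omega
  have htree := tree_balanced (d + 1) L hLne (by omega) hLtrees
  have hyield : (L.map Prod.fst).flatten = Ms := by
    have h1 : L.map Prod.fst = parts := by
      rw [hL, List.map_map]
      have hcomp : (Prod.fst ∘ fun c : List (Matrix (Fin d) (Fin d) ℚ) => (c, c.prod)) = id := rfl
      rw [hcomp, List.map_id]
    rw [h1, hparts]
    have h2 := flatten_parts_aux Mf n r k 0 (by simpa using hkn)
    rw [List.range_eq_range']
    have h3 : sts Mf n r 0 = 0 := rfl
    rw [h2, h3, Nat.sub_zero, ← hMs]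
  rw [hyield] at htree
  rw [show 1 + (d + 1) = d + 2 from by omega] at htree
  exact ⟨_, htree⟩
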